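/- Let T(B) be the threshold graph generated by a binary string B with |B| ≥ 2 (a vertex for each symbol; an edge between symbols x and y with x to the left of y iff y = 1), and suppose T(B) is connected. A set S ⊆ V(T(B)) is a zero forcing set if and only if (1) S excludes at most one vertex from each block of B, and (2) between any two 1-vertices not in S there is a 0-vertex of B that is in S. -/

import Mathlib

/-- The set of vertices eventually colored ("forced") by the zero forcing process
starting from the initially colored set `S`: a colored vertex with exactly one
uncolored neighbor forces that neighbor to become colored. -/
inductive SimpleGraph.Forced {V : Type*} (G : SimpleGraph V) (S : Set V) : V → Prop
  | mem {v : V} : v ∈ S → G.Forced S v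
  | force {u v : V} : G.Adj u v → G.Forced S u →
      (∀ w, G.Adj u w → w ≠ v → G.Forced S w) → G.Forced S v

/-- `S` is a zero forcing set of `G` if the zero forcing process starting from `S`
colors every vertex. -/
def SimpleGraph.IsZeroForcingSet {V : Type*} (G : SimpleGraph V) (S : Set V) : Prop :=
  ∀ v, G.Forced S v

/-- `z(G;i)`: the number of zero forcing sets of `G` of size `i`. -/
noncomputable def SimpleGraph.zcount {V : Type*} [Fintype V] (G : SimpleGraph V) (i : ℕ) : ℕ :=
  Nat.card {S : Finset V // S.card = i ∧ G.IsZeroForcingSet ↑S}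

/-- `Z(G)`: the zero forcing number, the minimum size of a zero forcing set. -/
noncomputable def SimpleGraph.zfNumber {V : Type*} [Fintype V] (G : SimpleGraph V) : ℕ :=
  sInf {i | ∃ S : Finset V, S.card = i ∧ G.IsZeroForcingSet ↑S}

/-- The zero forcing polynomial `𝒵(G;x) = ∑_{i=1}^n z(G;i) x^i`. -/
noncomputable def SimpleGraph.zfPoly {V : Type*} [Fintype V] (G : SimpleGraph V) : Polynomial ℤ :=
  ∑ i ∈ Finset.Icc 1 (Fintype.card V), Polynomial.C (G.zcount i : ℤ) * Polynomial.X ^ i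

/-- The path `P_n` on `n` vertices. -/
def pathG (n : ℕ) : SimpleGraph (Fin n) :=
  SimpleGraph.fromRel (fun i j => (i : ℕ) + 1 = j)

/-- The cycle `C_n` on `n` vertices. -/
def cycleG (n : ℕ) : SimpleGraph (Fin n) :=
  SimpleGraph.fromRel (fun i j => ((i : ℕ) + 1) % n = j)

/-- The threshold graph generated by a binary string `B` (of length `n`): the vertices are
the symbols of `B`, and there is an edge between symbols `x` and `y` with `x` to the left
of `y` iff `y = 1`. -/
def thresholdG (n : ℕ) (B : Fin n → Bool) : SimpleGraph (Fin n) :=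
  SimpleGraph.fromRel (fun i j => i < j ∧ B j = true)

private lemma tadj {n : ℕ} {B : Fin n → Bool} {i j : Fin n} :
    (thresholdG n B).Adj i j ↔ i ≠ j ∧ ((i < j ∧ B j = true) ∨ (j < i ∧ B i = true)) := by
  simp [thresholdG, SimpleGraph.fromRel_adj]


private lemma fort_not_forced {V : Type*} (G : SimpleGraph V) (S F : Set V)
    (hFS : ∀ v ∈ F, v ∉ S)
    (hfort : ∀ u, u ∉ F → ∀ v ∈ F, G.Adj u v → ∃ w ∈ F, w ≠ v ∧ G.Adj u w) :
    ∀ v, G.Forced S v → v ∉ F := by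
  intro v h
  induction h with
  | mem hv => exact fun hF => hFS _ hF hv
  | @force u v hadj hu hall ihu ihall =>
    intro hvF
    obtain ⟨w, hwF, hwv, hw⟩ := hfort u ihu v hvF hadj
    exact ihall w hw hwv hwF

private lemma forced_trans {V : Type*} (G : SimpleGraph V) (S S' : Set V)
    (h : ∀ s ∈ S', G.Forced S s) : ∀ v, G.Forced S' v → G.Forced S v := by
  intro v hv
  induction hv with
  | mem hv => exact h _ hv
  | force hadj _ _ ihu ihall => exact SimpleGraph.Forced.force hadj ihu ihall


open Finset in
private lemma one_step {n : ℕ} (hn : 2 ≤ n) (B : Fin n → Bool)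
    (hB01 : B ⟨0, Nat.lt_of_lt_of_le (by decide) hn⟩ = B ⟨1, Nat.lt_of_lt_of_le (by decide) hn⟩)
    (hlast : B ⟨n - 1, Nat.sub_lt (Nat.lt_of_lt_of_le (by decide) hn) Nat.one_pos⟩ = true)
    (S : Set (Fin n))
    (h1 : ∀ i j : Fin n, i ≤ j → (∀ k, i ≤ k → k ≤ j → B k = B i) →
          i ∉ S → j ∉ S → i = j)
    (h2 : ∀ i j : Fin n, i < j → B i = true → B j = true → i ∉ S → j ∉ S →
          ∃ k, i < k ∧ k < j ∧ B k = false ∧ k ∈ S)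
    (hne : ∃ x, x ∉ S) :
    ∃ u v, u ∈ S ∧ v ∉ S ∧ (thresholdG n B).Adj u v ∧
      ∀ w, (thresholdG n B).Adj u w → w ≠ v → w ∈ S := by
  classical
  set T1 : Finset (Fin n) := univ.filter (fun i => i ∉ S ∧ B i = true) with hT1def
  have hT1mem : ∀ x : Fin n, x ∈ T1 ↔ (x ∉ S ∧ B x = true) := by
    intro x; simp [hT1def]
  by_cases hT1 : T1.Nonempty
  · -- there is a missing 1-vertex; v := largest missing 1-vertex
    set v := T1.max' hT1 with hvdef
    obtain ⟨hvS, hvB⟩ := (hT1mem v).1 (T1.max'_mem hT1)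
    by_cases hT2 : (T1.erase v).Nonempty
    · -- at least two missing 1-vertices
      set v' := (T1.erase v).max' hT2 with hv'def
      have hv'mem := Finset.max'_mem _ hT2
      rw [Finset.mem_erase] at hv'mem
      obtain ⟨hv'ne, hv'T1⟩ := hv'mem
      obtain ⟨hv'S, hv'B⟩ := (hT1mem v').1 hv'T1
      have hv'v : v' < v := lt_of_le_of_ne (Finset.le_max' T1 v' hv'T1) hv'ne
      obtain ⟨k, hkl, hkr, hkB, hkS⟩ := h2 v' v hv'v hv'B hvB hv'S hvS
      refine ⟨k, v, hkS, hvS, tadj.2 ⟨ne_of_lt hkr, Or.inl ⟨hkr, hvB⟩⟩, ?_⟩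
      intro w hw hwv
      by_contra hwS
      rcases (tadj.1 hw).2 with ⟨hkw, hBw⟩ | ⟨hwk, hBk⟩
      · -- w is a missing 1-vertex, w ≠ v, so w ≤ v' < k < w : contradiction
        have hwT1 : w ∈ T1.erase v := Finset.mem_erase.2 ⟨hwv, (hT1mem w).2 ⟨hwS, hBw⟩⟩
        have := Finset.le_max' _ w hwT1
        exact absurd (lt_of_le_of_lt (this.trans hkl.le) hkw) (lt_irrefl w)
      · rw [hkB] at hBk; exact Bool.false_ne_true hBk
    · -- exactly one missing 1-vertex v
      have huniq : ∀ w : Fin n, w ∉ S → B w = true → w = v := by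
        intro w hwS hwB
        by_contra h
        exact hT2 ⟨w, Finset.mem_erase.2 ⟨h, (hT1mem w).2 ⟨hwS, hwB⟩⟩⟩
      by_cases hk0 : ∃ k : Fin n, B k = false ∧ k < v ∧ k ∈ S
      · -- a colored 0-vertex before v forces v
        obtain ⟨k, hkB, hkv, hkS⟩ := hk0
        refine ⟨k, v, hkS, hvS, tadj.2 ⟨ne_of_lt hkv, Or.inl ⟨hkv, hvB⟩⟩, ?_⟩
        intro w hw hwv
        by_contra hwS
        rcases (tadj.1 hw).2 with ⟨_, hBw⟩ | ⟨_, hBk⟩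
        · exact hwv (huniq w hwS hBw)
        · rw [hkB] at hBk; exact Bool.false_ne_true hBk
      · push_neg at hk0
        -- hk0 : ∀ k, B k = false → k < v → k ∉ S
        set M : Finset (Fin n) := univ.filter (fun i => i ∉ S) with hMdef
        have hMmem : ∀ x : Fin n, x ∈ M ↔ x ∉ S := by intro x; simp [hMdef]
        have hM : M.Nonempty := ⟨v, (hMmem v).2 hvS⟩
        set m1 := M.min' hM with hm1def
        have hm1S : m1 ∉ S := (hMmem m1).1 (M.min'_mem hM)
        have hmin : ∀ w : Fin n, w < m1 → w ∈ S := by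
          intro w hw
          by_contra hwS
          exact absurd (M.min'_le w ((hMmem w).2 hwS)) (not_le.2 hw)
        have hm1v : m1 ≤ v := M.min'_le v ((hMmem v).2 hvS)
        by_cases hu : ∃ u : Fin n, u < m1 ∧ B u = true
        · obtain ⟨u, hum, huB⟩ := hu
          have huS : u ∈ S := hmin u hum
          have huv : u < v := lt_of_lt_of_le hum hm1v
          refine ⟨u, v, huS, hvS, tadj.2 ⟨ne_of_lt huv, Or.inl ⟨huv, hvB⟩⟩, ?_⟩
          intro w hw hwv
          by_contra hwS
          rcases (tadj.1 hw).2 with ⟨_, hBw⟩ | ⟨hwu, _⟩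
          · exact hwv (huniq w hwS hBw)
          · exact hwS (hmin w (hwu.trans hum))
        · push_neg at hu
          -- hu : ∀ u, u < m1 → B u ≠ true, i.e. everything below m1 is a 0-vertex
          -- but everything below m1 is colored, and there is no colored 0-vertex < v;
          -- since m1 ≤ v, m1 must be 0
          have hm10 : m1 = ⟨0, by omega⟩ := by
            by_contra h
            have h0 : (⟨0, by omega⟩ : Fin n) < m1 := by
              simp only [ne_eq, Fin.ext_iff] at h
              simp only [Fin.lt_def]
              omega
            have hB0 : B ⟨0, by omega⟩ = false := by
              have := hu ⟨0, by omega⟩ h0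
              simpa using this
            exact (hk0 _ hB0 (lt_of_lt_of_le h0 hm1v)) (hmin _ h0)
          by_cases hB0 : B ⟨0, by omega⟩ = true
          · -- v = 0, forcer is vertex 1
            have hv0 : v = ⟨0, by omega⟩ := by
              rw [← hm10] at hB0 ⊢
              exact (huniq m1 hm1S hB0).symm
            have hB1 : B ⟨1, by omega⟩ = true := by rw [← hB01]; exact hB0
            have h1S : (⟨1, by omega⟩ : Fin n) ∈ S := by
              by_contra h
              have := huniq _ h hB1
              rw [hv0] at this
              simp only [Fin.ext_iff] at this
              omega
            have h01 : v < (⟨1, by omega⟩ : Fin n) := by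
              rw [hv0]
              simp only [Fin.lt_def]
              omega
            refine ⟨⟨1, by omega⟩, v, h1S, hvS, tadj.2 ⟨(ne_of_lt h01).symm, Or.inr ⟨h01, hB1⟩⟩, ?_⟩
            intro w hw hwv
            by_contra hwS
            rcases (tadj.1 hw).2 with ⟨h1w, hBw⟩ | ⟨hw1, _⟩
            · exact hwv (huniq w hwS hBw)
            · -- w < 1 means w = 0 = v
              have : w = v := by
                rw [hv0]
                simp only [Fin.lt_def] at hw1
                simp only [Fin.ext_iff]
                omega
              exact hwv this
          · -- B 0 = false and m1 = 0; then B 1 = false, condition 1 gives 1 ∈ S,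
            -- contradicting hk0 since 1 < v
            exfalso
            have hB0' : B ⟨0, by omega⟩ = false := by
              cases h : B ⟨0, by omega⟩ with
              | false => rfl
              | true => exact absurd h hB0
            have hB1 : B ⟨1, by omega⟩ = false := by rw [← hB01]; exact hB0'
            have h1S : (⟨1, by omega⟩ : Fin n) ∈ S := by
              by_contra h
              have h0S : (⟨0, by omega⟩ : Fin n) ∉ S := by rw [← hm10]; exact hm1S
              have := h1 ⟨0, by omega⟩ ⟨1, by omega⟩ (by simp only [Fin.le_def]; omega)
                (fun k hk1 hk2 => by
                  have hk2' : (k : ℕ) ≤ 1 := by simpa [Fin.le_def] using hk2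
                  rcases Nat.le_one_iff_eq_zero_or_eq_one.1 hk2' with h' | h'
                  · have hke : k = ⟨0, by omega⟩ := Fin.ext h'
                    rw [hke]
                  · have hke : k = ⟨1, by omega⟩ := Fin.ext h'
                    rw [hke, hB1, hB0'])
                h0S h
              simp only [Fin.ext_iff] at this
              omega
            have h1v : (⟨1, by omega⟩ : Fin n) < v := by
              have hne0 : v ≠ ⟨0, by omega⟩ := fun h => by
                rw [h, hB0'] at hvB; exact Bool.false_ne_true hvB
              have hne1 : v ≠ ⟨1, by omega⟩ := fun h => by
                rw [h, hB1] at hvB; exact Bool.false_ne_true hvB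
              simp only [ne_eq, Fin.ext_iff] at hne0 hne1
              simp only [Fin.lt_def]
              omega
            exact (hk0 _ hB1 h1v) h1S
  · -- no missing 1-vertex; force the smallest missing (0-)vertex
    have hall1 : ∀ w : Fin n, B w = true → w ∈ S := by
      intro w hwB
      by_contra h
      exact hT1 ⟨w, (hT1mem w).2 ⟨h, hwB⟩⟩
    set M : Finset (Fin n) := univ.filter (fun i => i ∉ S) with hMdef
    have hMmem : ∀ x : Fin n, x ∈ M ↔ x ∉ S := by intro x; simp [hMdef]
    obtain ⟨x0, hx0⟩ := hne
    have hM : M.Nonempty := ⟨x0, (hMmem x0).2 hx0⟩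
    set m1 := M.min' hM with hm1def
    have hm1S : m1 ∉ S := (hMmem m1).1 (M.min'_mem hM)
    have hmin : ∀ w : Fin n, w < m1 → w ∈ S := by
      intro w hw
      by_contra hwS
      exact absurd (M.min'_le w ((hMmem w).2 hwS)) (not_le.2 hw)
    have hm1B : B m1 = false := by
      cases h : B m1 with
      | false => rfl
      | true => exact absurd (hall1 m1 h) hm1S
    set U : Finset (Fin n) := univ.filter (fun w => m1 < w ∧ B w = true) with hUdef
    have hUmem : ∀ x : Fin n, x ∈ U ↔ (m1 < x ∧ B x = true) := by intro x; simp [hUdef]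
    have hUne : U.Nonempty := by
      refine ⟨⟨n - 1, by omega⟩, (hUmem _).2 ⟨?_, hlast⟩⟩
      have hne' : m1 ≠ ⟨n - 1, by omega⟩ := fun h => by
        rw [h, hlast] at hm1B; exact absurd hm1B (by simp)
      have hlt := m1.isLt
      simp only [ne_eq, Fin.ext_iff] at hne'
      simp only [Fin.lt_def]
      omega
    set u := U.min' hUne with hudef
    obtain ⟨hm1u, huB⟩ := (hUmem u).1 (U.min'_mem hUne)
    have huS : u ∈ S := hall1 u huB
    refine ⟨u, m1, huS, hm1S, tadj.2 ⟨(ne_of_lt hm1u).symm, Or.inr ⟨hm1u, huB⟩⟩, ?_⟩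
    intro w hw hwm1
    by_contra hwS
    rcases (tadj.1 hw).2 with ⟨_, hBw⟩ | ⟨hwu, _⟩
    · exact hwS (hall1 w hBw)
    · -- w < u, w ∉ S, w ≠ m1, so m1 < w; B w must be false; then condition 1 on [m1, w]
      have hm1w : m1 < w := by
        rcases lt_or_ge w m1 with h | h
        · exact absurd (hmin w h) hwS
        · exact lt_of_le_of_ne h (Ne.symm hwm1)
      have hBwf : B w = false := by
        cases h : B w with
        | false => rfl
        | true => exact absurd (hall1 w h) hwS
      have := h1 m1 w hm1w.le
        (fun k hk1 hk2 => by
          cases h : B k with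
          | false => rw [hm1B]
          | true =>
            have hku : k ∈ U := (hUmem k).2 ⟨lt_of_le_of_ne hk1 (fun he => by
              rw [← he, hm1B] at h; exact Bool.false_ne_true h), h⟩
            have := U.min'_le k hku
            exact absurd (lt_of_le_of_lt (this.trans hk2) hwu) (lt_irrefl _))
        hm1S hwS
      exact hwm1 this.symm

open Finset in
private lemma zfs_of_conds {n : ℕ} (hn : 2 ≤ n) (B : Fin n → Bool)
    (hB01 : B ⟨0, Nat.lt_of_lt_of_le (by decide) hn⟩ = B ⟨1, Nat.lt_of_lt_of_le (by decide) hn⟩)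
    (hlast : B ⟨n - 1, Nat.sub_lt (Nat.lt_of_lt_of_le (by decide) hn) Nat.one_pos⟩ = true) :
    ∀ (S : Set (Fin n)),
    (∀ i j : Fin n, i ≤ j → (∀ k, i ≤ k → k ≤ j → B k = B i) →
          i ∉ S → j ∉ S → i = j) →
    (∀ i j : Fin n, i < j → B i = true → B j = true → i ∉ S → j ∉ S →
          ∃ k, i < k ∧ k < j ∧ B k = false ∧ k ∈ S) →
    (thresholdG n B).IsZeroForcingSet S := by
  classical
  suffices key : ∀ m (S : Set (Fin n)),
      (∀ i j : Fin n, i ≤ j → (∀ k, i ≤ k → k ≤ j → B k = B i) →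
            i ∉ S → j ∉ S → i = j) →
      (∀ i j : Fin n, i < j → B i = true → B j = true → i ∉ S → j ∉ S →
            ∃ k, i < k ∧ k < j ∧ B k = false ∧ k ∈ S) →
      (univ.filter (fun i => i ∉ S)).card ≤ m → (thresholdG n B).IsZeroForcingSet S by
    intro S h1 h2
    exact key _ S h1 h2 le_rfl
  intro m
  induction m with
  | zero =>
    intro S h1 h2 hcard v
    refine SimpleGraph.Forced.mem ?_
    by_contra hv
    have hvm : v ∈ univ.filter (fun i => i ∉ S) := by simp [hv]
    have := Finset.card_pos.mpr ⟨v, hvm⟩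
    omega
  | succ m ih =>
    intro S h1 h2 hcard
    by_cases hall : ∀ x : Fin n, x ∈ S
    · exact fun v => SimpleGraph.Forced.mem (hall v)
    · push_neg at hall
      obtain ⟨u, v0, huS, hv0S, hadj, hforce⟩ := one_step hn B hB01 hlast S h1 h2 hall
      have hv0 : (thresholdG n B).Forced S v0 :=
        SimpleGraph.Forced.force hadj (SimpleGraph.Forced.mem huS)
          (fun w hw hwv => SimpleGraph.Forced.mem (hforce w hw hwv))
      have h1' : ∀ i j : Fin n, i ≤ j → (∀ k, i ≤ k → k ≤ j → B k = B i) →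
            i ∉ insert v0 S → j ∉ insert v0 S → i = j := by
        intro i j hij hb hi hj
        exact h1 i j hij hb (fun h => hi (Set.mem_insert_of_mem _ h))
          (fun h => hj (Set.mem_insert_of_mem _ h))
      have h2' : ∀ i j : Fin n, i < j → B i = true → B j = true →
            i ∉ insert v0 S → j ∉ insert v0 S →
            ∃ k, i < k ∧ k < j ∧ B k = false ∧ k ∈ insert v0 S := by
        intro i j hij hBi hBj hi hj
        obtain ⟨k, ha, hb, hc, hd⟩ := h2 i j hij hBi hBj
          (fun h => hi (Set.mem_insert_of_mem _ h)) (fun h => hj (Set.mem_insert_of_mem _ h))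
        exact ⟨k, ha, hb, hc, Set.mem_insert_of_mem _ hd⟩
      have hc' : (univ.filter (fun i => i ∉ insert v0 S)).card ≤ m := by
        have hsub : univ.filter (fun i => i ∉ insert v0 S) ⊆
            (univ.filter (fun i => i ∉ S)).erase v0 := by
          intro x hx
          simp only [Finset.mem_filter, Finset.mem_univ, true_and, Set.mem_insert_iff,
            not_or, Finset.mem_erase] at hx ⊢
          exact ⟨hx.1, hx.2⟩
        have h1c := Finset.card_le_card hsub
        have h2c : v0 ∈ univ.filter (fun i => i ∉ S) := by simp [hv0S]
        rw [Finset.card_erase_of_mem h2c] at h1c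
        have := Finset.card_pos.mpr ⟨v0, h2c⟩
        omega
      have hZ' := ih (insert v0 S) h1' h2' (by convert hc' using 3)
      intro v
      refine forced_trans _ S (insert v0 S) ?_ v (hZ' v)
      intro s hs
      rcases Set.mem_insert_iff.1 hs with rfl | hs
      · exact hv0
      · exact SimpleGraph.Forced.mem hs

private lemma forward_cond1 {n : ℕ} (B : Fin n → Bool) (S : Set (Fin n))
    (hZ : (thresholdG n B).IsZeroForcingSet S) :
    ∀ i j : Fin n, i ≤ j → (∀ k, i ≤ k → k ≤ j → B k = B i) → i ∉ S → j ∉ S → i = j := by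
  intro i j hij hblock hiS hjS
  by_contra hne
  have hij' : i < j := lt_of_le_of_ne hij hne
  have hBj : B j = B i := hblock j hij le_rfl
  set F : Set (Fin n) := {i, j} with hF
  have haux : ∀ u, u ∉ F → ((thresholdG n B).Adj u i ∨ (thresholdG n B).Adj u j) →
      (thresholdG n B).Adj u i ∧ (thresholdG n B).Adj u j := by
    intro u hu hadj
    have hui : u ≠ i := fun h => hu (by simp [hF, h])
    have huj : u ≠ j := fun h => hu (by simp [hF, h])
    cases hBi : B i with
    | true =>
      have hBj' : B j = true := by rw [hBj, hBi]
      rcases lt_trichotomy u i with h | h | h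
      · exact ⟨tadj.2 ⟨hui, Or.inl ⟨h, hBi⟩⟩, tadj.2 ⟨huj, Or.inl ⟨h.trans hij', hBj'⟩⟩⟩
      · exact absurd h hui
      · rcases lt_trichotomy u j with h2 | h2 | h2
        · have hBu : B u = true := by rw [hblock u h.le h2.le, hBi]
          exact ⟨tadj.2 ⟨hui, Or.inr ⟨h, hBu⟩⟩, tadj.2 ⟨huj, Or.inl ⟨h2, hBj'⟩⟩⟩
        · exact absurd h2 huj
        · have hBu : B u = true := by
            rcases hadj with ha | ha
            · rcases (tadj.1 ha).2 with ⟨h3, _⟩ | ⟨_, h3⟩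
              · exact absurd h3 (asymm h)
              · exact h3
            · rcases (tadj.1 ha).2 with ⟨h3, _⟩ | ⟨_, h3⟩
              · exact absurd h3 (asymm h2)
              · exact h3
          exact ⟨tadj.2 ⟨hui, Or.inr ⟨h, hBu⟩⟩, tadj.2 ⟨huj, Or.inr ⟨h2, hBu⟩⟩⟩
    | false =>
      have hBj' : B j = false := by rw [hBj, hBi]
      have hBu : i < u ∧ B u = true := by
        rcases hadj with ha | ha
        · rcases (tadj.1 ha).2 with ⟨_, h3⟩ | ⟨h3, h4⟩
          · rw [hBi] at h3; exact absurd h3 (by simp)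
          · exact ⟨h3, h4⟩
        · rcases (tadj.1 ha).2 with ⟨_, h3⟩ | ⟨h3, h4⟩
          · rw [hBj'] at h3; exact absurd h3 (by simp)
          · exact ⟨hij'.trans h3, h4⟩
      have hju : j < u := by
        rcases lt_trichotomy u j with h | h | h
        · have hb : B u = B i := hblock u hBu.1.le h.le
          rw [hBi] at hb; rw [hb] at hBu
          exact absurd hBu.2 (by simp)
        · exact absurd h huj
        · exact h
      exact ⟨tadj.2 ⟨hui, Or.inr ⟨hBu.1, hBu.2⟩⟩, tadj.2 ⟨huj, Or.inr ⟨hju, hBu.2⟩⟩⟩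
  have hnf := fort_not_forced (thresholdG n B) S F
    (by
      intro v hv
      simp only [hF, Set.mem_insert_iff, Set.mem_singleton_iff] at hv
      rcases hv with rfl | rfl
      · exact hiS
      · exact hjS)
    (by
      intro u hu v hv hadj
      have hvij : v = i ∨ v = j := by
        simpa only [hF, Set.mem_insert_iff, Set.mem_singleton_iff] using hv
      have h2 : _ := haux u hu (by rcases hvij with rfl | rfl; exact Or.inl hadj; exact Or.inr hadj)
      rcases hvij with rfl | rfl
      · exact ⟨j, by simp [hF], fun h => hne h.symm, h2.2⟩
      · exact ⟨i, by simp [hF], hne, h2.1⟩)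
  exact hnf i (hZ i) (by simp [hF])

private lemma forward_cond2 {n : ℕ} (B : Fin n → Bool) (S : Set (Fin n))
    (hZ : (thresholdG n B).IsZeroForcingSet S) :
    ∀ i j : Fin n, i < j → B i = true → B j = true → i ∉ S → j ∉ S →
      ∃ k, i < k ∧ k < j ∧ B k = false ∧ k ∈ S := by
  intro i j hij hBi hBj hiS hjS
  by_contra hno
  push_neg at hno
  set F : Set (Fin n) := {v | v = i ∨ v = j ∨ (i < v ∧ v < j ∧ B v = false)} with hF
  have haux : ∀ u, u ∉ F → (∃ v ∈ F, (thresholdG n B).Adj u v) →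
      (thresholdG n B).Adj u i ∧ (thresholdG n B).Adj u j := by
    intro u hu hadj
    have hui : u ≠ i := fun h => hu (Or.inl h)
    have huj : u ≠ j := fun h => hu (Or.inr (Or.inl h))
    rcases lt_trichotomy u i with h | h | h
    · exact ⟨tadj.2 ⟨hui, Or.inl ⟨h, hBi⟩⟩, tadj.2 ⟨huj, Or.inl ⟨h.trans hij, hBj⟩⟩⟩
    · exact absurd h hui
    · rcases lt_trichotomy u j with h2 | h2 | h2
      · have hBu : B u = true := by
          cases hb : B u with
          | true => rfl
          | false => exact absurd (Or.inr (Or.inr ⟨h, h2, hb⟩)) hu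
        exact ⟨tadj.2 ⟨hui, Or.inr ⟨h, hBu⟩⟩, tadj.2 ⟨huj, Or.inl ⟨h2, hBj⟩⟩⟩
      · exact absurd h2 huj
      · obtain ⟨v, hvF, hav⟩ := hadj
        have hvu : v < u := by
          rcases hvF with rfl | rfl | ⟨_, hv2, _⟩
          · exact h
          · exact h2
          · exact hv2.trans h2
        have hBu : B u = true := by
          rcases (tadj.1 hav).2 with ⟨h3, _⟩ | ⟨_, h3⟩
          · exact absurd h3 (asymm hvu)
          · exact h3
        exact ⟨tadj.2 ⟨hui, Or.inr ⟨h, hBu⟩⟩, tadj.2 ⟨huj, Or.inr ⟨h2, hBu⟩⟩⟩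
  have hnf := fort_not_forced (thresholdG n B) S F
    (by
      intro v hv
      rcases hv with rfl | rfl | ⟨h1', h2', h3'⟩
      · exact hiS
      · exact hjS
      · intro hvS
        exact hno v h1' h2' h3' hvS)
    (by
      intro u hu v hv hadj
      have h2 := haux u hu ⟨v, hv, hadj⟩
      by_cases hvi : v = i
      · refine ⟨j, Or.inr (Or.inl rfl), ?_, h2.2⟩
        rw [hvi]
        exact (ne_of_lt hij).symm
      · exact ⟨i, Or.inl rfl, fun h => hvi h.symm, h2.1⟩)
  exact hnf i (hZ i) (Or.inl rfl)


/-- In a connected threshold graph `T(B)` (with first two symbols of `B`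
equal and last block a 1-block), `S` is a zero forcing set iff (1) `S` excludes at most one
vertex from each block of `B`, and (2) between any two 1-vertices not in `S` there is a
0-vertex in `S`. -/
theorem threshold_zfs_iff (n : ℕ) (hn : 2 ≤ n) (B : Fin n → Bool)
    (hB01 : B ⟨0, by omega⟩ = B ⟨1, by omega⟩)
    (hlast : B ⟨n - 1, by omega⟩ = true)
    (hconn : (thresholdG n B).Connected) (S : Set (Fin n)) :
    (thresholdG n B).IsZeroForcingSet S ↔
      ((∀ i j : Fin n, i ≤ j → (∀ k, i ≤ k → k ≤ j → B k = B i) →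
          i ∉ S → j ∉ S → i = j) ∧
       (∀ i j : Fin n, i < j → B i = true → B j = true → i ∉ S → j ∉ S →
          ∃ k, i < k ∧ k < j ∧ B k = false ∧ k ∈ S)) := by
  constructor
  · intro hZ
    exact ⟨forward_cond1 B S hZ, forward_cond2 B S hZ⟩
  · rintro ⟨h1', h2'⟩
    exact zfs_of_conds hn B hB01 hlast S h1' h2'
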